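/- Let n, m be positive integers, ζ = 2π/n, u : ℝ → ℂ be 2π-periodic, and ℓ, α, k integers with gcd(ℓ, m) = 1 and kℓ − αm = rn for some integer r. Define q_j(t) = e^{i t ℓ/m} e^{i j α ζ} u(t + j k ζ) for j ∈ ℤ. Let ℓ* satisfy ℓℓ* ≡ 1 (mod m) and set k̃ = k − r n ℓ*. Then q_j(t) = q_0(t + j k̃ ζ) for all j ∈ ℤ and t ∈ ℝ. -/

import Mathlib

theorem choreography_theorem (n m : ℕ) (hn : 0 < n) (hm : 0 < m)
    (ζ : ℝ) (hζ : ζ = 2 * Real.pi / n)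
    (u : ℝ → ℂ) (hu : ∀ t, u (t + 2 * Real.pi) = u t)
    (ℓ α k r : ℤ) (hco : Int.gcd ℓ (m : ℤ) = 1)
    (hres : k * ℓ - α * (m : ℤ) = r * (n : ℤ))
    (q : ℤ → ℝ → ℂ)
    (hq : ∀ (j : ℤ) (t : ℝ),
      q j t = Complex.exp (Complex.I * t * ℓ / m) * Complex.exp (Complex.I * j * α * ζ)
        * u (t + j * k * ζ))
    (ℓstar : ℤ) (hinv : ℓ * ℓstar ≡ 1 [ZMOD (m : ℤ)])
    (ktilde : ℤ) (hk : ktilde = k - r * n * ℓstar) :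
    ∀ (j : ℤ) (t : ℝ), q j t = q 0 (t + j * ktilde * ζ) := by
  intro j t
  have hnR : (n : ℝ) ≠ 0 := Nat.cast_ne_zero.mpr hn.ne'
  have hnC : (n : ℂ) ≠ 0 := Nat.cast_ne_zero.mpr hn.ne'
  have hmC : (m : ℂ) ≠ 0 := Nat.cast_ne_zero.mpr hm.ne'
  obtain ⟨c, hc⟩ : (m : ℤ) ∣ 1 - ℓ * ℓstar := Int.ModEq.dvd hinv
  -- periodicity for integer multiples
  have hper : Function.Periodic u (2 * Real.pi) := hu
  have huZ : ∀ (s : ℝ) (z : ℤ), u (s + z * (2 * Real.pi)) = u s := fun s z =>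
    (hper.int_mul z) s
  -- u argument identity
  have hA : t + (j : ℝ) * ktilde * ζ = (t + j * k * ζ) + (-(j * r * ℓstar) : ℤ) * (2 * Real.pi) := by
    subst hk hζ
    field_simp
    push_cast
    ring
  -- integer identity for the phase
  have hZ : ktilde * ℓ = α * m + r * n * (m * c) := by
    subst hk
    linear_combination hres + r * n * hc
  have hZC : (ktilde : ℂ) * ℓ = α * m + r * n * (m * c) := by exact_mod_cast hZ
  have hζC : (ζ : ℂ) = 2 * Real.pi / n := by rw [hζ]; push_cast; ring
  -- phase identity
  have hB : Complex.I * ((t : ℂ) + (j : ℂ) * ktilde * ζ) * ℓ / m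
      = Complex.I * t * ℓ / m + Complex.I * j * α * ζ
        + (j * r * c : ℤ) * (2 * Real.pi * Complex.I) := by
    push_cast
    rw [hζC]
    field_simp
    linear_combination (j * 2 * Real.pi) * hZC
  rw [hq j t, hq 0 (t + (j : ℝ) * ktilde * ζ)]
  simp only [Int.cast_zero, mul_zero, zero_mul, Complex.ofReal_zero, add_zero,
    Complex.exp_zero, mul_one]
  have hu' : u (t + (j : ℝ) * ktilde * ζ) = u (t + (j : ℝ) * k * ζ) := by
    rw [hA]; exact huZ _ _
  rw [hu']
  congr 1
  push_cast
  rw [hB, Complex.exp_add, Complex.exp_add, Complex.exp_int_mul_two_pi_mul_I, mul_one]
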